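/- Let X, Z be sets, and m < ω. Suppose R ⊆ X × Z is a relation such that there is no sequence (a_i; b_i : i < m) in X × Z with R(a_n, b_i) ∧ ¬R(a_i, b_n) for all i < n < m (finitary stability with bound m). Let D ⊆ Z be approximable by R: for every finite B ⊆ Z there is a ∈ X with (b ∈ D ⟺ R(a,b)) for all b ∈ B. Then there exist k, m' < ω and elements (a_{i,j} : i < k, j < m') in X such that for all b ∈ Z: b ∈ D ⟺ ⋁_{i<k} ⋀_{j<m'} R(a_{i,j}, b). -/

import Mathlib

private lemma exists_inf_fiber {s : Set ℕ} (hs : s.Infinite) {r : ℕ} (g : ℕ → ℕ)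
    (hg : ∀ y ∈ s, g y < r) : ∃ c, c < r ∧ {y ∈ s | g y = c}.Infinite := by
  by_contra h
  push_neg at h
  have hsub : s ⊆ ⋃ c ∈ Finset.range r, {y ∈ s | g y = c} := by
    intro y hy
    simp only [Set.mem_iUnion, Finset.mem_range]
    exact ⟨g y, hg y hy, hy, rfl⟩
  exact hs ((Set.Finite.biUnion (Finset.range r).finite_toSet
    (fun c hc => (h c (Finset.mem_range.mp hc)))).subset hsub)

private lemma ramsey_pairs {r : ℕ} (f : ℕ → ℕ → ℕ)
    (hf : ∀ i j, i < j → f i j < r) :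
    ∃ (g : ℕ → ℕ) (c : ℕ), StrictMono g ∧ ∀ i j, i < j → f (g i) (g j) = c := by
  classical
  have key : ∀ S : Set ℕ, S.Infinite →
      ∃ c, c < r ∧ {y ∈ S | sInf S < y ∧ f (sInf S) y = c}.Infinite := by
    intro S hS
    have h1 : {y ∈ S | sInf S < y}.Infinite := by
      refine (hS.diff (Set.finite_Iic (sInf S))).mono ?_
      intro y hy
      exact ⟨hy.1, by simpa using hy.2⟩
    obtain ⟨c, hc, hinf⟩ := exists_inf_fiber h1 (fun y => f (sInf S) y)
      (fun y hy => hf _ _ hy.2)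
    refine ⟨c, hc, hinf.mono ?_⟩
    intro y hy
    exact ⟨hy.1.1, hy.1.2, hy.2⟩
  let step : {S : Set ℕ // S.Infinite} → {S : Set ℕ // S.Infinite} :=
    fun S => ⟨_, (key S.1 S.2).choose_spec.2⟩
  let Q : ℕ → {S : Set ℕ // S.Infinite} := fun n => step^[n] ⟨Set.univ, Set.infinite_univ⟩
  let xs : ℕ → ℕ := fun n => sInf (Q n).1
  let col : ℕ → ℕ := fun n => (key (Q n).1 (Q n).2).choose
  have hQsucc : ∀ n, (Q (n+1)).1 = {y ∈ (Q n).1 | xs n < y ∧ f (xs n) y = col n} := by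
    intro n
    show (step^[n+1] _).1 = _
    rw [Function.iterate_succ_apply']
  have hxmem : ∀ n, xs n ∈ (Q n).1 := fun n => Nat.sInf_mem (Q n).2.nonempty
  have hmono' : ∀ i k, (Q (i + k)).1 ⊆ (Q i).1 := by
    intro i k
    induction k with
    | zero => exact fun y hy => hy
    | succ k ih =>
      intro y hy
      rw [show i + (k+1) = (i+k) + 1 from rfl, hQsucc (i+k)] at hy
      exact ih hy.1
  have hmono : ∀ i j, i ≤ j → (Q j).1 ⊆ (Q i).1 := by
    intro i j hij
    have := hmono' i (j - i)
    rwa [Nat.add_sub_cancel' hij] at this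
  have hpair : ∀ i j, i < j → f (xs i) (xs j) = col i := by
    intro i j hij
    have : xs j ∈ (Q (i+1)).1 := hmono (i+1) j hij (hxmem j)
    rw [hQsucc i] at this
    exact this.2.2
  have hxs : StrictMono xs := by
    apply strictMono_nat_of_lt_succ
    intro n
    have : xs (n+1) ∈ (Q (n+1)).1 := hxmem (n+1)
    rw [hQsucc n] at this
    exact this.2.1
  have hcollt : ∀ n, col n < r := fun n => (key (Q n).1 (Q n).2).choose_spec.1
  obtain ⟨c, hcr, hcinf⟩ := exists_inf_fiber Set.infinite_univ col
    (fun y _ => hcollt y)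
  have hpinf : {n | col n = c}.Infinite := by
    refine hcinf.mono ?_
    intro y hy; exact hy.2
  refine ⟨fun k => xs (Nat.nth (fun n => col n = c) k), c,
    hxs.comp (Nat.nth_strictMono hpinf), ?_⟩
  intro i j hij
  rw [hpair _ _ ((Nat.nth_strictMono hpinf) hij)]
  exact Nat.nth_mem_of_infinite hpinf i

private lemma lemA {X Z : Type*} (R : X → Z → Prop) (m : ℕ)
    (hstable : ¬ ∃ (a : ℕ → X) (b : ℕ → Z),
      ∀ i n : ℕ, i < n → n < m → R (a n) (b i) ∧ ¬ R (a i) (b n))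
    (D : Set Z)
    (happrox : ∀ B : Finset Z, ∃ a : X, ∀ b ∈ B, (b ∈ D ↔ R a b))
    (B : Finset Z) :
    ∃ a : ℕ → X, (∀ b ∈ B, b ∈ D → ∀ j : ℕ, R (a j) b) ∧
      (∀ c : Z, (∀ j < m, R (a j) c) → c ∈ D) := by
  classical
  obtain ⟨x0, -⟩ := happrox ∅
  rcases isEmpty_or_nonempty Z with hZ | hZ
  · exact ⟨fun _ => x0, fun b hb => (hZ.elim b), fun c => (hZ.elim c)⟩
  obtain ⟨z0⟩ := hZ
  have H : ∀ d n, n + d = m →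
      (∃ (a : ℕ → X) (b : ℕ → Z),
        (∀ i < n, b i ∉ D) ∧
        (∀ i j, i ≤ j → j < n → R (a i) (b j)) ∧
        (∀ i j, i < j → j < n → ¬ R (a j) (b i)) ∧
        (∀ i < n, ∀ x ∈ B, x ∈ D → R (a i) x)) →
      ∃ a : ℕ → X, (∀ b ∈ B, b ∈ D → ∀ j : ℕ, R (a j) b) ∧
        (∀ c : Z, (∀ j < m, R (a j) c) → c ∈ D) := by
    intro d
    induction d with
    | zero =>
      intro n hn hInv
      exfalso
      obtain ⟨a, b, h1, h2, h3, h4⟩ := hInv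
      have hnm : n = m := by omega
      subst hnm
      apply hstable
      refine ⟨fun t => a (n - 1 - t), fun t => b (n - 1 - t), ?_⟩
      intro i n' hin hn'
      exact ⟨h2 _ _ (by omega) (by omega), h3 _ _ (by omega) (by omega)⟩
    | succ d ih =>
      intro n hn hInv
      obtain ⟨a, b, h1, h2, h3, h4⟩ := hInv
      obtain ⟨an, han⟩ := happrox (B ∪ (Finset.range n).image b)
      have haval : ∀ i, i ≠ n → Function.update a n an i = a i :=
        fun i h => Function.update_of_ne h _ _
      have hanv : Function.update a n an n = an := Function.update_self _ _ _
      by_cases hc : ∃ c, c ∉ D ∧ ∀ i ≤ n, R (Function.update a n an i) c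
      · obtain ⟨cn, hcn1, hcn2⟩ := hc
        refine ih (n+1) (by omega)
          ⟨Function.update a n an, Function.update b n cn, ?_, ?_, ?_, ?_⟩
        · intro i hi
          rcases Nat.lt_or_ge i n with h | h
          · rw [Function.update_of_ne (show i ≠ n by omega)]
            exact h1 i h
          · have : i = n := by omega
            subst this
            rw [Function.update_self]
            exact hcn1
        · intro i j hij hj
          rcases Nat.lt_or_ge j n with h | h
          · rw [Function.update_of_ne (show j ≠ n by omega),
              haval i (by omega)]
            exact h2 i j hij h
          · have : j = n := by omega
            subst this
            rw [Function.update_self]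
            exact hcn2 i hij
        · intro i j hij hj
          rcases Nat.lt_or_ge j n with h | h
          · rw [haval j (by omega), Function.update_of_ne (show i ≠ n by omega)]
            exact h3 i j hij h
          · have hjn : j = n := by omega
            subst hjn
            rw [hanv, Function.update_of_ne (show i ≠ j by omega)]
            intro hR
            have hbi : b i ∈ B ∪ (Finset.range j).image b :=
              Finset.mem_union_right _ (Finset.mem_image_of_mem b (Finset.mem_range.mpr hij))
            exact h1 i hij ((han (b i) hbi).mpr hR)
        · intro i hi x hx hxD
          rcases Nat.lt_or_ge i n with h | h
          · rw [haval i (by omega)]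
            exact h4 i h x hx hxD
          · have : i = n := by omega
            subst this
            rw [hanv]
            exact (han x (Finset.mem_union_left _ hx)).mp hxD
      · push_neg at hc
        refine ⟨fun j => Function.update a n an (min j n), ?_, ?_⟩
        · intro b0 hb0 hb0D j
          show R (Function.update a n an (min j n)) b0
          rcases Nat.lt_or_ge j n with h | h
          · rw [show min j n = j by omega, haval j (by omega)]
            exact h4 j h b0 hb0 hb0D
          · rw [show min j n = n by omega, hanv]
            exact (han b0 (Finset.mem_union_left _ hb0)).mp hb0D
        · intro c hcall
          by_contra hcD
          obtain ⟨i, hi, hni⟩ := hc c hcD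
          apply hni
          have him : i < m := by omega
          have h5 : R (Function.update a n an (min i n)) c := hcall i him
          rwa [show min i n = i by omega] at h5
  exact H m 0 (by omega) ⟨fun _ => x0, fun _ => z0,
    fun i hi => absurd hi (Nat.not_lt_zero i),
    fun i j _ hj => absurd hj (Nat.not_lt_zero j),
    fun i j _ hj => absurd hj (Nat.not_lt_zero j),
    fun i hi => absurd hi (Nat.not_lt_zero i)⟩

theorem stmt12 {X Z : Type*} (R : X → Z → Prop) (m : ℕ)
    (hstable : ¬ ∃ (a : ℕ → X) (b : ℕ → Z),
      ∀ i n : ℕ, i < n → n < m → R (a n) (b i) ∧ ¬ R (a i) (b n))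
    (D : Set Z)
    (happrox : ∀ B : Finset Z, ∃ a : X, ∀ b ∈ B, (b ∈ D ↔ R a b)) :
    ∃ (k m' : ℕ) (A : ℕ → ℕ → X),
      ∀ b : Z, b ∈ D ↔ ∃ i < k, ∀ j < m', R (A i j) b := by
  classical
  choose F hF1 hF2 using fun s => lemA R m hstable D happrox s
  by_contra hgoal
  have key : ∀ T : Finset (Finset Z), ∃ z, z ∈ D ∧ ∀ s ∈ T, ∃ j < m, ¬ R (F s j) z := by
    intro T
    by_contra hk
    push_neg at hk
    apply hgoal
    refine ⟨T.toList.length, m, fun i j => F (T.toList.getD i ∅) j, fun b => ?_⟩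
    constructor
    · intro hb
      obtain ⟨s, hs, hjs⟩ := hk b hb
      obtain ⟨i, hi, hieq⟩ := List.mem_iff_getElem.mp (Finset.mem_toList.mpr hs)
      refine ⟨i, hi, fun j hj => ?_⟩
      show R (F (T.toList.getD i ∅) j) b
      rw [List.getD_eq_getElem _ _ hi, hieq]
      exact hjs j hj
    · rintro ⟨i, hi, hR⟩
      exact hF2 (T.toList.getD i ∅) b (fun j hj => hR j hj)
  have hstep : ∀ t : Finset (Z × Finset Z),
      (∀ p ∈ t, p.1 ∈ p.2 ∧ ↑p.2 ⊆ D) →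
      ∃ q : Z × Finset Z, (q.1 ∈ q.2 ∧ ↑q.2 ⊆ D) ∧
        ∀ p ∈ t, p.2 ⊆ q.2 ∧ ∃ j < m, ¬ R (F p.2 j) q.1 := by
    intro t ht
    obtain ⟨z, hzD, hz⟩ := key (t.image Prod.snd)
    refine ⟨(z, insert z (t.sup Prod.snd)), ⟨Finset.mem_insert_self _ _, ?_⟩, ?_⟩
    · intro x hx
      rcases Finset.mem_insert.mp hx with h | h
      · subst h; exact hzD
      · obtain ⟨p, hp, hxp⟩ := Finset.mem_sup.mp h
        exact (ht p hp).2 hxp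
    · intro p hp
      refine ⟨(Finset.le_sup (f := Prod.snd) hp).trans (Finset.subset_insert _ _), ?_⟩
      exact hz p.2 (Finset.mem_image_of_mem _ hp)
  obtain ⟨f, hfP, hfr⟩ := exists_seq_of_forall_finset_exists
    (fun p : Z × Finset Z => p.1 ∈ p.2 ∧ ↑p.2 ⊆ D)
    (fun p q => p.2 ⊆ q.2 ∧ ∃ j < m, ¬ R (F p.2 j) q.1) hstep
  have pos : ∀ i j, i < j → ∀ jj, R (F ((f j).2) jj) ((f i).1) := by
    intro i j hij jj
    refine hF1 ((f j).2) ((f i).1) ((hfr i j hij).1 ((hfP i).1)) ?_ jj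
    exact (hfP i).2 ((hfP i).1)
  have neg : ∀ i j, i < j → ∃ jj < m, ¬ R (F ((f i).2) jj) ((f j).1) :=
    fun i j h => (hfr i j h).2
  have hcol_lt : ∀ i j, i < j →
      (if h : ∃ jj < m, ¬ R (F ((f i).2) jj) ((f j).1) then h.choose else 0) < m := by
    intro i j hij
    rw [dif_pos (neg i j hij)]
    exact (neg i j hij).choose_spec.1
  obtain ⟨g, c, hg, hgc⟩ := ramsey_pairs
    (fun i j => if h : ∃ jj < m, ¬ R (F ((f i).2) jj) ((f j).1) then h.choose else 0)
    hcol_lt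
  apply hstable
  refine ⟨fun t => F ((f (g t)).2) c, fun t => (f (g t)).1, ?_⟩
  intro i n hin hnm
  constructor
  · exact pos _ _ (hg hin) c
  · have hc := hgc i n hin
    rw [dif_pos (neg _ _ (hg hin))] at hc
    rw [← hc]
    exact (neg _ _ (hg hin)).choose_spec.2
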